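/- Let S = {s_1 < … < s_k} with k ≥ 2 be split at a maximum gap into S_1 = {s_1,…,s_a} and S_2 = {s_{a+1},…,s_k} as in the definition of PTCP, let A* = A*[S] be the PTCP algorithm, and consider OFAL(S,1). Let σ = r_1⋯r_k be a request sequence of full length, i an index and s ∈ F_{i−1}(A*) with s ≠ s_{A*}(r_i;σ), and let t*, a_t, h_t (i ≤ t ≤ t*) be as given by the singleton-difference lemma for the hybrid H_{i,s}. If a_i, h_i ∈ S_1, then a_t, h_t ∈ S_1 for every i ≤ t ≤ t*; likewise, if a_i, h_i ∈ S_2, then a_t, h_t ∈ S_2 for every i ≤ t ≤ t*. -/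

import Mathlib

noncomputable section

namespace OFAL

/-! ### Basic model: servers are points of the real line, given as a `Finset ℝ`. -/

/-- Decrease the remaining capacity of server `m` by one. -/
def decCap (c : ℝ → ℕ) (m : ℝ) : ℝ → ℕ := fun x => if x = m then c x - 1 else c x

/-- Remaining capacities after a list of matches. -/
def useCaps : (ℝ → ℕ) → List ℝ → (ℝ → ℕ)
  | c, [] => c
  | c, m :: ms => useCaps (decCap c m) ms

/-- The set of servers that are still free. -/
def freeOf (S : Finset ℝ) (c : ℝ → ℕ) : Finset ℝ := S.filter fun x => 0 < c x

/-- Run an algorithm given by a choice function `f` (mapping the position of the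
current request and the current set of free servers to the chosen server)
on a request sequence, producing the list of matched servers. -/
def runC (S : Finset ℝ) (f : ℝ → Finset ℝ → ℝ) : (ℝ → ℕ) → List ℝ → List ℝ
  | _, [] => []
  | c, r :: rs => f r (freeOf S c) :: runC S f (decCap c (f r (freeOf S c))) rs

/-- The server with which the algorithm matches the `i`-th request (0-indexed). -/
def mtch (S : Finset ℝ) (f : ℝ → Finset ℝ → ℝ) (c : ℝ → ℕ) (σ : List ℝ) (i : ℕ) : ℝ :=
  (runC S f c σ).getD i 0

/-- Total cost incurred by the algorithm on a request sequence. -/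
def algCost (S : Finset ℝ) (f : ℝ → Finset ℝ → ℝ) (c : ℝ → ℕ) (σ : List ℝ) : ℝ :=
  ((σ.zip (runC S f c σ)).map fun p => |p.1 - p.2|).sum

def totalCap (S : Finset ℝ) (c : ℝ → ℕ) : ℕ := ∑ x ∈ S, c x

/-- A valid request sequence: at most as many requests as total capacity. -/
def ValidSeq (S : Finset ℝ) (c : ℝ → ℕ) (σ : List ℝ) : Prop := σ.length ≤ totalCap S c

/-- A valid (offline) assignment of requests to servers. -/
def ValidAssign (S : Finset ℝ) (c : ℝ → ℕ) (σ : List ℝ) (m : ℕ → ℝ) : Prop :=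
  (∀ i < σ.length, m i ∈ S) ∧
  ∀ x ∈ S, ((List.range σ.length).filter fun i => m i = x).length ≤ c x

def assignCost (σ : List ℝ) (m : ℕ → ℝ) : ℝ :=
  ∑ i ∈ Finset.range σ.length, |σ.getD i 0 - m i|

/-- Cost of an optimal offline assignment. -/
def Opt (S : Finset ℝ) (c : ℝ → ℕ) (σ : List ℝ) : ℝ :=
  sInf { t | ∃ m, ValidAssign S c σ m ∧ assignCost σ m = t }

/-- Unit capacities. -/
def c1 : ℝ → ℕ := fun _ => 1

/-- The set of servers still free after the first `t` matches of `ms`. -/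
def freeAfter (S : Finset ℝ) (c : ℝ → ℕ) (ms : List ℝ) (t : ℕ) : Finset ℝ :=
  S.filter fun x => (ms.take t).count x < c x

/-! ### MPFS algorithms -/

/-- A choice function is an MPFS algorithm if it is given by a family of linear
orders (priorities, encoded by an injective rank function) on the servers, one for
each request position, and selects the free server with the highest priority. -/
def IsMPFS (S : Finset ℝ) (f : ℝ → Finset ℝ → ℝ) : Prop :=
  ∃ rank : ℝ → ℝ → ℕ,
    (∀ r : ℝ, Set.InjOn (rank r) (S : Set ℝ)) ∧
    ∀ (r : ℝ) (F : Finset ℝ), F ⊆ S → F.Nonempty →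
      f r F ∈ F ∧ ∀ y ∈ F, rank r (f r F) ≤ rank r y

/-! ### Geometry of the server layout -/

/-- `a` and `b` are adjacent servers of `T` with `a < b`. -/
def IsGapPair (T : Finset ℝ) (a b : ℝ) : Prop :=
  a ∈ T ∧ b ∈ T ∧ a < b ∧ ∀ x ∈ T, x ≤ a ∨ b ≤ x

/-- The maximum distance between two adjacent servers. -/
def maxGap (T : Finset ℝ) : ℝ := sSup { d | ∃ a b, IsGapPair T a b ∧ d = b - a }

/-- The minimum distance between two adjacent servers. -/
def minGap (T : Finset ℝ) : ℝ := sInf { d | ∃ a b, IsGapPair T a b ∧ d = b - a }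

/-- `L(T)`: the ratio of the diameter of `T` to its maximum gap (0 if `|T| ≤ 1`). -/
def Lval (T : Finset ℝ) : ℝ :=
  if 2 ≤ T.card then (sSup (T : Set ℝ) - sInf (T : Set ℝ)) / maxGap T else 0

/-- `α(S) = max_{T ⊆ S} L(T)`. -/
def alpha (S : Finset ℝ) : ℝ :=
  (S.powerset.image Lval).max'
    ⟨Lval ∅, Finset.mem_image_of_mem _ (Finset.empty_mem_powerset S)⟩

/-- The aspect ratio `U(S)`: diameter over minimum gap. -/
def Uval (S : Finset ℝ) : ℝ := (sSup (S : Set ℝ) - sInf (S : Set ℝ)) / minGap S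

/-! ### Surrounding servers -/

/-- `x` is a surrounding server of a request at `r` among the free servers `F`. -/
def IsSurrounding (F : Finset ℝ) (r x : ℝ) : Prop :=
  x ∈ F ∧
    (if r ∈ F then x = r
     else (x < r ∧ ∀ y ∈ F, y ≤ x ∨ r < y) ∨ (r < x ∧ ∀ y ∈ F, y < r ∨ x ≤ y))

/-- No element of `F` lies strictly between `u` and `v`. -/
def NoFreeBetween (F : Finset ℝ) (u v : ℝ) : Prop :=
  ∀ y ∈ F, ¬ (min u v < y ∧ y < max u v)

/-- A choice-function algorithm is surrounding-oriented if on every request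
sequence it matches every request with one of its surrounding servers. -/
def SurrOriented (S : Finset ℝ) (f : ℝ → Finset ℝ → ℝ) : Prop :=
  ∀ (c : ℝ → ℕ) (σ : List ℝ), ValidSeq S c σ → ∀ i < σ.length,
    IsSurrounding (freeAfter S c (runC S f c σ) i) (σ.getD i 0) (mtch S f c σ i)

/-! ### Faithful algorithms -/

/-- `τ` is closer than `σ` with respect to the algorithm. -/
def Closer (S : Finset ℝ) (f : ℝ → Finset ℝ → ℝ) (c : ℝ → ℕ) (σ τ : List ℝ) : Prop :=
  τ.length = σ.length ∧
  (∀ i < σ.length, τ.getD i 0 ∈ Set.uIcc (σ.getD i 0) (mtch S f c σ i)) ∧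
  ∃ i < σ.length, |τ.getD i 0 - mtch S f c σ i| < |σ.getD i 0 - mtch S f c σ i|

/-- A faithful algorithm matches a closer request sequence with the same servers. -/
def FaithfulC (S : Finset ℝ) (f : ℝ → Finset ℝ → ℝ) : Prop :=
  ∀ (c : ℝ → ℕ) (σ τ : List ℝ), ValidSeq S c σ → Closer S f c σ τ →
    ∀ i < σ.length, mtch S f c τ i = mtch S f c σ i

/-- `σ` is opposite w.r.t. the algorithm: there is an optimal assignment `m` such
that every request lies between its online server and its offline server. -/
def OppositeC (S : Finset ℝ) (f : ℝ → Finset ℝ → ℝ) (c : ℝ → ℕ) (σ : List ℝ) : Prop :=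
  ∃ m : ℕ → ℝ, ValidAssign S c σ m ∧ assignCost σ m = Opt S c σ ∧
    ∀ i < σ.length, σ.getD i 0 ∈ Set.uIcc (mtch S f c σ i) (m i)

/-! ### Hybrid algorithms (unit capacities) -/

/-- The list of matches of the hybrid algorithm `H_{i,s}` (with `i` 1-indexed):
the first `i-1` requests are matched as by the algorithm, the `i`-th is matched
with `s`, and the rest are matched by the algorithm's choice function. -/
def hybridRun (S : Finset ℝ) (f : ℝ → Finset ℝ → ℝ) (c : ℝ → ℕ)
    (σ : List ℝ) (i : ℕ) (s : ℝ) : List ℝ :=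
  runC S f c (σ.take (i-1)) ++
    s :: runC S f (decCap (useCaps c (runC S f c (σ.take (i-1)))) s) (σ.drop i)

/-- The data produced by the singleton-difference lemma for the hybrid `H_{i,s}`:
for `i ≤ t ≤ t*` the free sets of `A` and of `H_{i,s}` differ exactly by the
singletons `{a t}` and `{h t}`, and they agree for `t ≥ t* + 1`. -/
def HybridData (S : Finset ℝ) (f : ℝ → Finset ℝ → ℝ) (σ : List ℝ)
    (i : ℕ) (s : ℝ) (tstar : ℕ) (a h : ℕ → ℝ) : Prop :=
  i ≤ tstar ∧ tstar + 1 ≤ S.card ∧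
  a i = s ∧ h i = mtch S f c1 σ (i-1) ∧
  (∀ t, i ≤ t → t ≤ tstar →
    freeAfter S c1 (runC S f c1 σ) t \ freeAfter S c1 (hybridRun S f c1 σ i s) t = {a t} ∧
    freeAfter S c1 (hybridRun S f c1 σ i s) t \ freeAfter S c1 (runC S f c1 σ) t = {h t}) ∧
  ∀ t, tstar + 1 ≤ t →
    freeAfter S c1 (runC S f c1 σ) t = freeAfter S c1 (hybridRun S f c1 σ i s) t

/-! ### The condition `C(A,T)` -/

/-- Condition (C3). -/
def C3 (S : Finset ℝ) (f : ℝ → Finset ℝ → ℝ) : Prop :=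
  2 ≤ S.card →
  ∀ σ : List ℝ, σ.length = S.card →
  ∀ i, 1 ≤ i → i ≤ S.card →
  ∀ s ∈ freeAfter S c1 (runC S f c1 σ) (i-1),
    s ≠ mtch S f c1 σ (i-1) →
    (IsSurrounding (freeAfter S c1 (runC S f c1 σ) (i-1)) (σ.getD (i-1) 0) s ∨
      ((∃! x, IsSurrounding (freeAfter S c1 (runC S f c1 σ) (i-1)) (σ.getD (i-1) 0) x) ∧
        NoFreeBetween (freeAfter S c1 (runC S f c1 σ) (i-1)) s (mtch S f c1 σ (i-1)))) →
    ∀ tstar a h, HybridData S f σ i s tstar a h →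
      |h tstar - σ.getD (i-1) 0| ≤ alpha S * |σ.getD (i-1) 0 - a i|

/-- The condition `C(A,S)`: faithful, surrounding-oriented, and (C3). -/
def CProp (S : Finset ℝ) (f : ℝ → Finset ℝ → ℝ) : Prop :=
  FaithfulC S f ∧ SurrOriented S f ∧ C3 S f

/-! ### The PTCP algorithm -/

/-- The critical point offset `x = D(Δ₂+D)/(Δ₁+Δ₂+2D)`. -/
def ptcpX (S : Finset ℝ) (sa sb : ℝ) : ℝ :=
  (sb - sa) * ((sSup (S : Set ℝ) - sb) + (sb - sa)) /
    ((sa - sInf (S : Set ℝ)) + (sSup (S : Set ℝ) - sb) + 2 * (sb - sa))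

/-- `IsPTCP S f` holds iff `f` behaves (on nonempty sets of free servers of `S`)
like the recursively defined algorithm PTCP: split `S` at (some) maximum gap
`(sa, sb)` into `S₁` and `S₂`, requests at most `sa + x` preferring `S₁`,
requests beyond preferring `S₂`. -/
inductive IsPTCP : Finset ℝ → (ℝ → Finset ℝ → ℝ) → Prop
  | single (s : ℝ) (f : ℝ → Finset ℝ → ℝ)
      (h : ∀ (r : ℝ) (F : Finset ℝ), F ⊆ ({s} : Finset ℝ) → F.Nonempty → f r F = s) :
      IsPTCP {s} f
  | split (S : Finset ℝ) (f f₁ f₂ : ℝ → Finset ℝ → ℝ) (sa sb : ℝ)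
      (hcard : 2 ≤ S.card) (hsa : sa ∈ S) (hsb : sb ∈ S) (hlt : sa < sb)
      (hadj : ∀ x ∈ S, x ≤ sa ∨ sb ≤ x)
      (hmax : sb - sa = maxGap S)
      (h1 : IsPTCP (S.filter (· ≤ sa)) f₁)
      (h2 : IsPTCP (S.filter (sb ≤ ·)) f₂)
      (hf : ∀ (r : ℝ) (F : Finset ℝ), F ⊆ S → F.Nonempty →
        f r F =
          if ¬(F.filter (sb ≤ ·)).Nonempty ∨
             (r ≤ sa + ptcpX S sa sb ∧ (F.filter (· ≤ sa)).Nonempty)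
          then f₁ r (F.filter (· ≤ sa))
          else f₂ r (F.filter (sb ≤ ·))) :
      IsPTCP S f

/-! ### The extended algorithm `A_{d,x}` -/

/-- The algorithm `A_{d,x}`: requests at most `sk + x` are served by `A` on `S`
(except when all of `S` is full, then by `s_{k+1}`), requests beyond `sk + x`
are served by `s_{k+1}` (except when it is full, then by `A` on `S`). -/
def extChoice (S : Finset ℝ) (f : ℝ → Finset ℝ → ℝ) (sk skp1 x : ℝ) :
    ℝ → Finset ℝ → ℝ :=
  fun r F =>
    if r ≤ sk + x then
      (if (F ∩ S).Nonempty then f r (F ∩ S) else skp1)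
    else
      (if skp1 ∈ F then skp1 else f r (F ∩ S))

/-! ### General deterministic online algorithms -/

/-- The server with which the online algorithm `A` (which sees the requests
processed so far and the current request) matches the `i`-th request (0-indexed). -/
def omatch (A : List ℝ → ℝ → ℝ) (σ : List ℝ) (i : ℕ) : ℝ := A (σ.take i) (σ.getD i 0)

def ocost (A : List ℝ → ℝ → ℝ) (σ : List ℝ) : ℝ :=
  ∑ i ∈ Finset.range σ.length, |σ.getD i 0 - omatch A σ i|

/-- The set of servers free for the online algorithm just before the `i`-th request. -/
def ofree (S : Finset ℝ) (c : ℝ → ℕ) (A : List ℝ → ℝ → ℝ) (σ : List ℝ) (i : ℕ) :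
    Finset ℝ :=
  S.filter fun x => ((List.range i).filter fun j => omatch A σ j = x).length < c x

/-- `A` is a (correct) deterministic online algorithm for `OFAL(S,c)`:
it always matches a request with a free server. -/
def IsOnline (S : Finset ℝ) (c : ℝ → ℕ) (A : List ℝ → ℝ → ℝ) : Prop :=
  ∀ σ : List ℝ, ValidSeq S c σ → ∀ i < σ.length, omatch A σ i ∈ ofree S c A σ i

def OSurrOriented (S : Finset ℝ) (c : ℝ → ℕ) (A : List ℝ → ℝ → ℝ) : Prop :=
  ∀ σ : List ℝ, ValidSeq S c σ → ∀ i < σ.length,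
    IsSurrounding (ofree S c A σ i) (σ.getD i 0) (omatch A σ i)

def OCloser (A : List ℝ → ℝ → ℝ) (σ τ : List ℝ) : Prop :=
  τ.length = σ.length ∧
  (∀ i < σ.length, τ.getD i 0 ∈ Set.uIcc (σ.getD i 0) (omatch A σ i)) ∧
  ∃ i < σ.length, |τ.getD i 0 - omatch A σ i| < |σ.getD i 0 - omatch A σ i|

def OFaithful (S : Finset ℝ) (c : ℝ → ℕ) (A : List ℝ → ℝ → ℝ) : Prop :=
  ∀ σ τ : List ℝ, ValidSeq S c σ → OCloser A σ τ →
    ∀ i < σ.length, omatch A τ i = omatch A σ i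

def OOpposite (S : Finset ℝ) (c : ℝ → ℕ) (A : List ℝ → ℝ → ℝ) (σ : List ℝ) : Prop :=
  ∃ m : ℕ → ℝ, ValidAssign S c σ m ∧ assignCost σ m = Opt S c σ ∧
    ∀ i < σ.length, σ.getD i 0 ∈ Set.uIcc (omatch A σ i) (m i)

/-- `Rate(σ) = A(σ)/Opt(σ)`, with the conventions for `Opt(σ) = 0`. -/
def Rate (S : Finset ℝ) (c : ℝ → ℕ) (A : List ℝ → ℝ → ℝ) (σ : List ℝ) : EReal :=
  if 0 < Opt S c σ then (((ocost A σ) / Opt S c σ : ℝ) : EReal)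
  else if 0 < ocost A σ then ⊤ else 1

/-! ### The permutation algorithm -/

/-- An execution of the permutation algorithm on `σ`, producing matches `p`:
there is a chain of minimum-cost assignments of the prefixes whose used server
multisets grow one server at a time, `p i` being the server added at step `i`. -/
def PermExec (S : Finset ℝ) (c : ℝ → ℕ) (σ : List ℝ) (p : ℕ → ℝ) : Prop :=
  ∃ M : ℕ → ℕ → ℝ,
    (∀ i ≤ σ.length,
      ValidAssign S c (σ.take i) (M i) ∧
      assignCost (σ.take i) (M i) = Opt S c (σ.take i)) ∧
    ∀ i < σ.length,
      (((List.range (i+1)).map (M (i+1)) : List ℝ) : Multiset ℝ) =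
        p i ::ₘ (((List.range i).map (M i) : List ℝ) : Multiset ℝ)

def execCost (σ : List ℝ) (p : ℕ → ℝ) : ℝ :=
  ∑ i ∈ Finset.range σ.length, |σ.getD i 0 - p i|

lemma runC_length (S : Finset ℝ) (f : ℝ → Finset ℝ → ℝ) :
    ∀ (c : ℝ → ℕ) (σ : List ℝ), (runC S f c σ).length = σ.length
  | _, [] => rfl
  | c, r :: rs => by simp [runC, runC_length]

lemma useCaps_append (c : ℝ → ℕ) (l1 l2 : List ℝ) :
    useCaps c (l1 ++ l2) = useCaps (useCaps c l1) l2 := by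
  induction l1 generalizing c with
  | nil => rfl
  | cons m ms ih => simp [useCaps, ih]

lemma useCaps_count (c : ℝ → ℕ) (l : List ℝ) (x : ℝ) :
    useCaps c l x = c x - l.count x := by
  induction l generalizing c with
  | nil => simp [useCaps]
  | cons m ms ih =>
    simp only [useCaps, ih, decCap, List.count_cons]
    by_cases hx : x = m
    · simp [hx]; omega
    · have : (m == x) = false := beq_false_of_ne (fun h => hx h.symm)
      simp [hx, this]

lemma freeOf_take (S : Finset ℝ) (ms : List ℝ) (t : ℕ) :
    freeOf S (useCaps c1 (ms.take t)) = freeAfter S c1 ms t := by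
  ext x
  simp only [freeOf, freeAfter, Finset.mem_filter, useCaps_count]
  simp only [c1]
  constructor
  · rintro ⟨h1, h2⟩; exact ⟨h1, by omega⟩
  · rintro ⟨h1, h2⟩; exact ⟨h1, by omega⟩

lemma runC_getD (S : Finset ℝ) (f : ℝ → Finset ℝ → ℝ) :
    ∀ (c : ℝ → ℕ) (σ : List ℝ) (t : ℕ), t < σ.length →
    (runC S f c σ).getD t 0 =
      f (σ.getD t 0) (freeOf S (useCaps c ((runC S f c σ).take t)))
  | c, [], t, ht => by simp at ht
  | c, r :: rs, 0, ht => by simp [runC, useCaps]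
  | c, r :: rs, t + 1, ht => by
    have ih := runC_getD S f (decCap c (f r (freeOf S c))) rs t (by simpa using ht)
    simpa [runC, useCaps, List.getD] using ih

lemma run_match (S : Finset ℝ) (f : ℝ → Finset ℝ → ℝ) (σ : List ℝ) (t : ℕ)
    (ht : t < σ.length) :
    (runC S f c1 σ).getD t 0 =
      f (σ.getD t 0) (freeAfter S c1 (runC S f c1 σ) t) := by
  rw [runC_getD S f c1 σ t ht, freeOf_take]

lemma freeAfter_succ (S : Finset ℝ) (ms : List ℝ) (t : ℕ) (ht : t < ms.length) :
    freeAfter S c1 ms (t + 1) = (freeAfter S c1 ms t).erase (ms.getD t 0) := by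
  ext x
  simp only [freeAfter, Finset.mem_filter, Finset.mem_erase]
  simp only [c1]
  have htake : ms.take (t + 1) = ms.take t ++ [ms.getD t 0] := by
    rw [List.take_succ]
    congr 1
    rw [List.getD_eq_getElem?_getD, List.getElem?_eq_getElem ht]
    simp
  rw [htake, List.count_append]
  constructor
  · rintro ⟨h1, h2⟩
    refine ⟨fun hx => ?_, h1, by omega⟩
    subst hx
    simp [List.count_singleton] at h2
  · rintro ⟨hne, h1, h2⟩
    refine ⟨h1, ?_⟩
    have hz : List.count x [ms.getD t 0] = 0 := List.count_eq_zero.2 (by simpa using hne)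
    omega

lemma hybridRun_length (S : Finset ℝ) (f : ℝ → Finset ℝ → ℝ) (σ : List ℝ)
    (i : ℕ) (s : ℝ) (hi : 1 ≤ i) (hiσ : i ≤ σ.length) :
    (hybridRun S f c1 σ i s).length = σ.length := by
  simp [hybridRun, runC_length]
  omega

lemma hybrid_match (S : Finset ℝ) (f : ℝ → Finset ℝ → ℝ) (σ : List ℝ)
    (i : ℕ) (s : ℝ) (t : ℕ) (hi : 1 ≤ i) (hiσ : i ≤ σ.length)
    (hti : i ≤ t) (htσ : t < σ.length) :
    (hybridRun S f c1 σ i s).getD t 0 =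
      f (σ.getD t 0) (freeAfter S c1 (hybridRun S f c1 σ i s) t) := by
  set L := runC S f c1 (σ.take (i - 1)) with hL
  set c' := decCap (useCaps c1 L) s with hc'
  set R := runC S f c' (σ.drop i) with hR
  have hLlen : L.length = i - 1 := by
    rw [hL, runC_length]; simp; omega
  have hRlen : R.length = σ.length - i := by rw [hR, runC_length]; simp
  have hhyb : hybridRun S f c1 σ i s = L ++ s :: R := rfl
  -- getD at position t
  have hgetD : (L ++ s :: R).getD t 0 = R.getD (t - i) 0 := by
    rw [List.getD_append_right _ _ _ _ (by omega : L.length ≤ t)]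
    have h2 : t - L.length = (t - i) + 1 := by omega
    rw [h2, List.getD_cons_succ]
  -- take at position t
  have htake : (L ++ s :: R).take t = L ++ s :: R.take (t - i) := by
    rw [List.take_append]
    rw [List.take_of_length_le (by omega : L.length ≤ t)]
    congr 1
    have : t - L.length = (t - i) + 1 := by omega
    rw [this]
    rfl
  have hcaps : useCaps c1 ((L ++ s :: R).take t) = useCaps c' (R.take (t - i)) := by
    rw [htake]
    have : L ++ s :: R.take (t - i) = (L ++ [s]) ++ R.take (t - i) := by simp
    rw [this, useCaps_append, useCaps_append]
    rfl
  have hdropget : (σ.drop i).getD (t - i) 0 = σ.getD t 0 := by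
    simp only [List.getD_eq_getElem?_getD, List.getElem?_drop,
      Nat.add_sub_cancel' hti]
  rw [hhyb, hgetD, hR, runC_getD S f c' (σ.drop i) (t - i) (by simp; omega),
    hdropget, ← hR, ← hcaps, ← hhyb, freeOf_take]

lemma IsPTCP.choose_mem {T : Finset ℝ} {g : ℝ → Finset ℝ → ℝ} (hT : IsPTCP T g) :
    ∀ (r : ℝ) (F : Finset ℝ), F ⊆ T → F.Nonempty → g r F ∈ F := by
  induction hT with
  | single s f hs =>
    intro r F hsub hne
    rw [hs r F hsub hne]
    obtain ⟨x, hx⟩ := hne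
    have := hsub hx
    simp only [Finset.mem_singleton] at this
    rwa [← this]
  | split S f f₁ f₂ sa sb hcard hsa hsb hlt hadj hmax h1 h2 hfd ih1 ih2 =>
    intro r F hsub hne
    rw [hfd r F hsub hne]
    by_cases hc : ¬(F.filter (sb ≤ ·)).Nonempty ∨
        (r ≤ sa + ptcpX S sa sb ∧ (F.filter (· ≤ sa)).Nonempty)
    · rw [if_pos hc]
      have hne1 : (F.filter (· ≤ sa)).Nonempty := by
        rcases hc with hc | hc
        · obtain ⟨x, hx⟩ := hne
          rcases hadj x (hsub hx) with hxa | hxb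
          · exact ⟨x, Finset.mem_filter.2 ⟨hx, hxa⟩⟩
          · exact absurd ⟨x, Finset.mem_filter.2 ⟨hx, hxb⟩⟩ hc
        · exact hc.2
      have := ih1 r (F.filter (· ≤ sa)) (Finset.filter_subset_filter _ hsub) hne1
      exact Finset.filter_subset _ _ this
    · rw [if_neg hc]
      push_neg at hc
      have := ih2 r (F.filter (sb ≤ ·)) (Finset.filter_subset_filter _ hsub) hc.1
      exact Finset.filter_subset _ _ this

lemma mem_of_sdiff_singleton {FA FH : Finset ℝ} {α : ℝ} (h : FA \ FH = {α}) :
    α ∈ FA ∧ α ∉ FH := by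
  have : α ∈ FA \ FH := by rw [h]; exact Finset.mem_singleton_self α
  exact Finset.mem_sdiff.1 this

lemma choiceS1 (S : Finset ℝ) (f f₁ f₂ : ℝ → Finset ℝ → ℝ) (sa sb : ℝ)
    (hlt : sa < sb)
    (h1 : IsPTCP (S.filter (· ≤ sa)) f₁)
    (hfdef : ∀ (r : ℝ) (F : Finset ℝ), F ⊆ S → F.Nonempty →
      f r F =
        if ¬(F.filter (sb ≤ ·)).Nonempty ∨
           (r ≤ sa + ptcpX S sa sb ∧ (F.filter (· ≤ sa)).Nonempty)
        then f₁ r (F.filter (· ≤ sa))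
        else f₂ r (F.filter (sb ≤ ·)))
    (FA FH : Finset ℝ) (r α η : ℝ)
    (hFAsub : FA ⊆ S) (hFHsub : FH ⊆ S)
    (hdA : FA \ FH = {α}) (hdH : FH \ FA = {η})
    (hαle : α ≤ sa) (hηle : η ≤ sa) :
    (f r FA ∈ S.filter (· ≤ sa) ∧ f r FH ∈ S.filter (· ≤ sa)) ∨ f r FA = f r FH := by
  obtain ⟨hαA, hαH⟩ := mem_of_sdiff_singleton hdA
  obtain ⟨hηH, hηA⟩ := mem_of_sdiff_singleton hdH
  have hfilteq : FA.filter (sb ≤ ·) = FH.filter (sb ≤ ·) := by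
    ext y
    simp only [Finset.mem_filter]
    constructor
    · rintro ⟨hy, hsby⟩
      refine ⟨?_, hsby⟩
      by_contra hyn
      have : y ∈ FA \ FH := Finset.mem_sdiff.2 ⟨hy, hyn⟩
      rw [hdA, Finset.mem_singleton] at this
      subst this; linarith
    · rintro ⟨hy, hsby⟩
      refine ⟨?_, hsby⟩
      by_contra hyn
      have : y ∈ FH \ FA := Finset.mem_sdiff.2 ⟨hy, hyn⟩
      rw [hdH, Finset.mem_singleton] at this
      subst this; linarith
  have hne1A : (FA.filter (· ≤ sa)).Nonempty := ⟨α, Finset.mem_filter.2 ⟨hαA, hαle⟩⟩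
  have hne1H : (FH.filter (· ≤ sa)).Nonempty := ⟨η, Finset.mem_filter.2 ⟨hηH, hηle⟩⟩
  rw [hfdef r FA hFAsub ⟨α, hαA⟩, hfdef r FH hFHsub ⟨η, hηH⟩]
  by_cases hc : ¬(FA.filter (sb ≤ ·)).Nonempty ∨
      (r ≤ sa + ptcpX S sa sb ∧ (FA.filter (· ≤ sa)).Nonempty)
  · have hcH : ¬(FH.filter (sb ≤ ·)).Nonempty ∨
        (r ≤ sa + ptcpX S sa sb ∧ (FH.filter (· ≤ sa)).Nonempty) := by
      rcases hc with hc | hc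
      · left; rwa [← hfilteq]
      · exact Or.inr ⟨hc.1, hne1H⟩
    rw [if_pos hc, if_pos hcH]
    left
    constructor
    · have := h1.choose_mem r (FA.filter (· ≤ sa))
        (Finset.filter_subset_filter _ hFAsub) hne1A
      rw [Finset.mem_filter] at this ⊢
      exact ⟨hFAsub this.1, this.2⟩
    · have := h1.choose_mem r (FH.filter (· ≤ sa))
        (Finset.filter_subset_filter _ hFHsub) hne1H
      rw [Finset.mem_filter] at this ⊢
      exact ⟨hFHsub this.1, this.2⟩
  · have hcH : ¬(¬(FH.filter (sb ≤ ·)).Nonempty ∨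
        (r ≤ sa + ptcpX S sa sb ∧ (FH.filter (· ≤ sa)).Nonempty)) := by
      intro hh
      apply hc
      rcases hh with hh | hh
      · left; rwa [hfilteq]
      · exact Or.inr ⟨hh.1, hne1A⟩
    rw [if_neg hc, if_neg hcH]
    right
    rw [hfilteq]

lemma choiceS2 (S : Finset ℝ) (f f₁ f₂ : ℝ → Finset ℝ → ℝ) (sa sb : ℝ)
    (hlt : sa < sb)
    (h2 : IsPTCP (S.filter (sb ≤ ·)) f₂)
    (hfdef : ∀ (r : ℝ) (F : Finset ℝ), F ⊆ S → F.Nonempty →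
      f r F =
        if ¬(F.filter (sb ≤ ·)).Nonempty ∨
           (r ≤ sa + ptcpX S sa sb ∧ (F.filter (· ≤ sa)).Nonempty)
        then f₁ r (F.filter (· ≤ sa))
        else f₂ r (F.filter (sb ≤ ·)))
    (FA FH : Finset ℝ) (r α η : ℝ)
    (hFAsub : FA ⊆ S) (hFHsub : FH ⊆ S)
    (hdA : FA \ FH = {α}) (hdH : FH \ FA = {η})
    (hαle : sb ≤ α) (hηle : sb ≤ η) :
    (f r FA ∈ S.filter (sb ≤ ·) ∧ f r FH ∈ S.filter (sb ≤ ·)) ∨ f r FA = f r FH := by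
  obtain ⟨hαA, hαH⟩ := mem_of_sdiff_singleton hdA
  obtain ⟨hηH, hηA⟩ := mem_of_sdiff_singleton hdH
  have hfilteq : FA.filter (· ≤ sa) = FH.filter (· ≤ sa) := by
    ext y
    simp only [Finset.mem_filter]
    constructor
    · rintro ⟨hy, hsby⟩
      refine ⟨?_, hsby⟩
      by_contra hyn
      have : y ∈ FA \ FH := Finset.mem_sdiff.2 ⟨hy, hyn⟩
      rw [hdA, Finset.mem_singleton] at this
      subst this; linarith
    · rintro ⟨hy, hsby⟩
      refine ⟨?_, hsby⟩
      by_contra hyn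
      have : y ∈ FH \ FA := Finset.mem_sdiff.2 ⟨hy, hyn⟩
      rw [hdH, Finset.mem_singleton] at this
      subst this; linarith
  have hne2A : (FA.filter (sb ≤ ·)).Nonempty := ⟨α, Finset.mem_filter.2 ⟨hαA, hαle⟩⟩
  have hne2H : (FH.filter (sb ≤ ·)).Nonempty := ⟨η, Finset.mem_filter.2 ⟨hηH, hηle⟩⟩
  rw [hfdef r FA hFAsub ⟨α, hαA⟩, hfdef r FH hFHsub ⟨η, hηH⟩]
  by_cases hc : ¬(FA.filter (sb ≤ ·)).Nonempty ∨
      (r ≤ sa + ptcpX S sa sb ∧ (FA.filter (· ≤ sa)).Nonempty)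
  · have hB : r ≤ sa + ptcpX S sa sb ∧ (FA.filter (· ≤ sa)).Nonempty := by
      rcases hc with hc | hc
      · exact absurd hne2A hc
      · exact hc
    have hcH : ¬(FH.filter (sb ≤ ·)).Nonempty ∨
        (r ≤ sa + ptcpX S sa sb ∧ (FH.filter (· ≤ sa)).Nonempty) := by
      right
      refine ⟨hB.1, ?_⟩
      rw [← hfilteq]
      exact hB.2
    rw [if_pos hc, if_pos hcH]
    right
    rw [hfilteq]
  · have hcH : ¬(¬(FH.filter (sb ≤ ·)).Nonempty ∨
        (r ≤ sa + ptcpX S sa sb ∧ (FH.filter (· ≤ sa)).Nonempty)) := by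
      intro hh
      apply hc
      rcases hh with hh | hh
      · exact (hh hne2H).elim
      · refine Or.inr ⟨hh.1, ?_⟩
        rw [hfilteq]
        exact hh.2
    rw [if_neg hc, if_neg hcH]
    left
    constructor
    · have := h2.choose_mem r (FA.filter (sb ≤ ·))
        (Finset.filter_subset_filter _ hFAsub) hne2A
      rw [Finset.mem_filter] at this ⊢
      exact ⟨hFAsub this.1, this.2⟩
    · have := h2.choose_mem r (FH.filter (sb ≤ ·))
        (Finset.filter_subset_filter _ hFHsub) hne2H
      rw [Finset.mem_filter] at this ⊢
      exact ⟨hFHsub this.1, this.2⟩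

lemma hybrid_stays_general (S : Finset ℝ) (f : ℝ → Finset ℝ → ℝ)
    (σ : List ℝ) (hlen : σ.length = S.card)
    (i : ℕ) (hi : 1 ≤ i) (hik : i ≤ S.card)
    (s : ℝ) (tstar : ℕ) (a h : ℕ → ℝ)
    (hdata : HybridData S f σ i s tstar a h)
    (P : Finset ℝ)
    (hchoice : ∀ (FA FH : Finset ℝ) (r α η : ℝ), FA ⊆ S → FH ⊆ S →
      FA \ FH = {α} → FH \ FA = {η} → α ∈ P → η ∈ P →
      (f r FA ∈ P ∧ f r FH ∈ P) ∨ f r FA = f r FH)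
    (hai : a i ∈ P) (hhi : h i ∈ P) :
    ∀ t, i ≤ t → t ≤ tstar → a t ∈ P ∧ h t ∈ P := by
  obtain ⟨hit, htcard, -, -, hsing, -⟩ := hdata
  intro t hit'
  induction t, hit' using Nat.le_induction with
  | base => exact fun _ => ⟨hai, hhi⟩
  | succ t hit2 ih =>
    intro hts
    have ht : t ≤ tstar := by omega
    obtain ⟨hat, hht⟩ := ih ht
    obtain ⟨hdA, hdH⟩ := hsing t hit2 ht
    obtain ⟨hdA', hdH'⟩ := hsing (t + 1) (by omega) hts
    set runA := runC S f c1 σ with hrunA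
    set hyb := hybridRun S f c1 σ i s with hhyb
    set FA := freeAfter S c1 runA t with hFA
    set FH := freeAfter S c1 hyb t with hFH
    have htσ : t < σ.length := by omega
    have hiσ : i ≤ σ.length := by omega
    set r := σ.getD t 0 with hr
    have hxA : runA.getD t 0 = f r FA := run_match S f σ t htσ
    have hxH : hyb.getD t 0 = f r FH := hybrid_match S f σ i s t hi hiσ hit2 htσ
    have hFA' : freeAfter S c1 runA (t + 1) = FA.erase (f r FA) := by
      rw [freeAfter_succ S runA t (by rw [hrunA, runC_length]; omega), hxA]
    have hFH' : freeAfter S c1 hyb (t + 1) = FH.erase (f r FH) := by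
      rw [freeAfter_succ S hyb t (by rw [hhyb, hybridRun_length S f σ i s hi hiσ]; omega), hxH]
    have hFAsub : FA ⊆ S := Finset.filter_subset _ _
    have hFHsub : FH ⊆ S := Finset.filter_subset _ _
    have hch := hchoice FA FH r (a t) (h t) hFAsub hFHsub hdA hdH hat hht
    rw [hFA', hFH'] at hdA' hdH'
    constructor
    · have ha' : a (t + 1) ∈ (FA.erase (f r FA)) \ (FH.erase (f r FH)) := by
        rw [hdA']; exact Finset.mem_singleton_self _
      rw [Finset.mem_sdiff, Finset.mem_erase] at ha'
      obtain ⟨⟨hne, hmem⟩, hnot⟩ := ha'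
      by_cases hcase : a (t + 1) = f r FH
      · rcases hch with ⟨_, hP⟩ | heq
        · rw [hcase]; exact hP
        · exact absurd (hcase.trans heq.symm) hne
      · have : a (t + 1) ∉ FH := fun hh => hnot (Finset.mem_erase.2 ⟨hcase, hh⟩)
        have : a (t + 1) ∈ FA \ FH := Finset.mem_sdiff.2 ⟨hmem, this⟩
        rw [hdA, Finset.mem_singleton] at this
        rw [this]; exact hat
    · have hh' : h (t + 1) ∈ (FH.erase (f r FH)) \ (FA.erase (f r FA)) := by
        rw [hdH']; exact Finset.mem_singleton_self _
      rw [Finset.mem_sdiff, Finset.mem_erase] at hh'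
      obtain ⟨⟨hne, hmem⟩, hnot⟩ := hh'
      by_cases hcase : h (t + 1) = f r FA
      · rcases hch with ⟨hP, _⟩ | heq
        · rw [hcase]; exact hP
        · exact absurd (hcase.trans heq) hne
      · have : h (t + 1) ∉ FA := fun hh => hnot (Finset.mem_erase.2 ⟨hcase, hh⟩)
        have : h (t + 1) ∈ FH \ FA := Finset.mem_sdiff.2 ⟨hmem, this⟩
        rw [hdH, Finset.mem_singleton] at this
        rw [this]; exact hht


/-- For the PTCP algorithm split at a maximum gap into `S₁`
and `S₂` (unit capacities): if `a_i, h_i ∈ S₁` then `a_t, h_t ∈ S₁` for every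
`i ≤ t ≤ t*`, and likewise for `S₂`. -/
theorem ptcp_hybrid_stays_in_half
    (S : Finset ℝ) (hcard : 2 ≤ S.card)
    (f f₁ f₂ : ℝ → Finset ℝ → ℝ) (sa sb : ℝ)
    (hsa : sa ∈ S) (hsb : sb ∈ S) (hlt : sa < sb)
    (hadj : ∀ y ∈ S, y ≤ sa ∨ sb ≤ y)
    (hmax : sb - sa = maxGap S)
    (h1 : IsPTCP (S.filter (· ≤ sa)) f₁)
    (h2 : IsPTCP (S.filter (sb ≤ ·)) f₂)
    (hfdef : ∀ (r : ℝ) (F : Finset ℝ), F ⊆ S → F.Nonempty →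
      f r F =
        if ¬(F.filter (sb ≤ ·)).Nonempty ∨
           (r ≤ sa + ptcpX S sa sb ∧ (F.filter (· ≤ sa)).Nonempty)
        then f₁ r (F.filter (· ≤ sa))
        else f₂ r (F.filter (sb ≤ ·)))
    (σ : List ℝ) (hlen : σ.length = S.card)
    (i : ℕ) (hi : 1 ≤ i) (hik : i ≤ S.card)
    (s : ℝ) (hfree : s ∈ freeAfter S c1 (runC S f c1 σ) (i-1))
    (hne : s ≠ mtch S f c1 σ (i-1))
    (tstar : ℕ) (a h : ℕ → ℝ)
    (hdata : HybridData S f σ i s tstar a h) :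
    (a i ∈ S.filter (· ≤ sa) → h i ∈ S.filter (· ≤ sa) →
      ∀ t, i ≤ t → t ≤ tstar →
        a t ∈ S.filter (· ≤ sa) ∧ h t ∈ S.filter (· ≤ sa)) ∧
    (a i ∈ S.filter (sb ≤ ·) → h i ∈ S.filter (sb ≤ ·) →
      ∀ t, i ≤ t → t ≤ tstar →
        a t ∈ S.filter (sb ≤ ·) ∧ h t ∈ S.filter (sb ≤ ·)) := by
  constructor
  · intro hai hhi
    exact hybrid_stays_general S f σ hlen i hi hik s tstar a h hdata
      (S.filter (· ≤ sa))
      (fun FA FH r α η hA hB hdA hdH hα hη =>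
        choiceS1 S f f₁ f₂ sa sb hlt h1 hfdef FA FH r α η hA hB hdA hdH
          (Finset.mem_filter.1 hα).2 (Finset.mem_filter.1 hη).2)
      hai hhi
  · intro hai hhi
    exact hybrid_stays_general S f σ hlen i hi hik s tstar a h hdata
      (S.filter (sb ≤ ·))
      (fun FA FH r α η hA hB hdA hdH hα hη =>
        choiceS2 S f f₁ f₂ sa sb hlt h2 hfdef FA FH r α η hA hB hdA hdH
          (Finset.mem_filter.1 hα).2 (Finset.mem_filter.1 hη).2)
      hai hhi

end OFAL
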